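/- Let C be a triangulated category equipped with a weight structure w, and let m ≤ m' ≤ n' ≤ n be integers. If a morphism g : M → N in C kills weights m,…,n, then g also kills weights m',…,n'. -/

import Mathlib

open CategoryTheory CategoryTheory.Limits CategoryTheory.Pretriangulated ZeroObject

universe v u

variable (C : Type u) [Category.{v} C] [HasZeroObject C] [Preadditive C] [HasShift C ℤ]
  [∀ n : ℤ, (shiftFunctor C n).Additive] [Pretriangulated C]

/-- A weight structure on a triangulated category `C`: a pair of retract-closed classes
`le = C_{w≤0}` and `ge = C_{w≥0}` satisfying semi-invariance with respect to translations,
orthogonality, and the existence of weight decompositions. -/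
structure WeightStructure where
  /-- the class `C_{w≤0}` -/
  le : Set C
  /-- the class `C_{w≥0}` -/
  ge : Set C
  /-- `C_{w≤0}` is closed under retracts -/
  le_retract : ∀ ⦃X Y : C⦄ (i : X ⟶ Y) (r : Y ⟶ X), i ≫ r = 𝟙 X → le Y → le X
  /-- `C_{w≥0}` is closed under retracts -/
  ge_retract : ∀ ⦃X Y : C⦄ (i : X ⟶ Y) (r : Y ⟶ X), i ≫ r = 𝟙 X → ge Y → ge X
  /-- `C_{w≤0} ⊆ C_{w≤0}[1]`, i.e. `X ∈ C_{w≤0} → X[-1] ∈ C_{w≤0}` -/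
  le_shift : ∀ ⦃X : C⦄, le X → le ((shiftFunctor C (-1 : ℤ)).obj X)
  /-- `C_{w≥0}[1] ⊆ C_{w≥0}`, i.e. `X ∈ C_{w≥0} → X[1] ∈ C_{w≥0}` -/
  ge_shift : ∀ ⦃X : C⦄, ge X → ge ((shiftFunctor C (1 : ℤ)).obj X)
  /-- orthogonality: `Hom(X, Y[1]) = 0` for `X ∈ C_{w≤0}`, `Y ∈ C_{w≥0}` -/
  orth : ∀ ⦃X Y : C⦄, le X → ge Y → ∀ f : X ⟶ (shiftFunctor C (1 : ℤ)).obj Y, f = 0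
  /-- existence of weight decompositions -/
  decomp : ∀ M : C, ∃ (X Y : C) (f : X ⟶ M) (g : M ⟶ Y)
      (h : Y ⟶ (shiftFunctor C (1 : ℤ)).obj X),
      Triangle.mk f g h ∈ (distTriang C) ∧ le X ∧ ge ((shiftFunctor C (-1 : ℤ)).obj Y)

variable {C}

namespace WeightStructure

/-- `X ∈ C_{w≤i} = C_{w≤0}[i]`, i.e. `X[-i] ∈ C_{w≤0}`. -/
def leDeg (w : WeightStructure C) (i : ℤ) (X : C) : Prop :=
  w.le ((shiftFunctor C (-i)).obj X)

/-- `X ∈ C_{w≥i} = C_{w≥0}[i]`, i.e. `X[-i] ∈ C_{w≥0}`. -/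
def geDeg (w : WeightStructure C) (i : ℤ) (X : C) : Prop :=
  w.ge ((shiftFunctor C (-i)).obj X)

/-- The triangle `A → M → B → A[1]` is an `m`-weight decomposition of `M`:
it is distinguished, `A ∈ C_{w≤m}` and `B ∈ C_{w≥m+1}`. -/
def IsWeightDecomp (w : WeightStructure C) (m : ℤ) {A M B : C}
    (f : A ⟶ M) (g : M ⟶ B) (h : B ⟶ (shiftFunctor C (1 : ℤ)).obj A) : Prop :=
  Triangle.mk f g h ∈ (distTriang C) ∧ w.leDeg m A ∧ w.geDeg (m + 1) B

/-- `g : M ⟶ N` kills weights `m,…,n`: there exist an `n`-weight decomposition of `M` and an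
`(m-1)`-weight decomposition of `N` such that the composite `w_{≤n}M → M → N → w_{≥m}N` is `0`. -/
def KillsWeights (w : WeightStructure C) (m n : ℤ) {M N : C} (g : M ⟶ N) : Prop :=
  ∃ (A B A' B' : C) (f : A ⟶ M) (p : M ⟶ B) (δ : B ⟶ (shiftFunctor C (1 : ℤ)).obj A)
    (f' : A' ⟶ N) (p' : N ⟶ B') (δ' : B' ⟶ (shiftFunctor C (1 : ℤ)).obj A'),
    w.IsWeightDecomp n f p δ ∧ w.IsWeightDecomp (m - 1) f' p' δ' ∧ f ≫ g ≫ p' = 0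

/-- `M` is without weights `m,…,n` if `𝟙 M` kills weights `m,…,n`. -/
def WithoutWeights (w : WeightStructure C) (m n : ℤ) (M : C) : Prop :=
  w.KillsWeights m n (𝟙 M)

end WeightStructure

namespace WeightStructure

lemma le_of_iso (w : WeightStructure C) {X Y : C} (e : X ≅ Y) (h : w.le Y) : w.le X :=
  w.le_retract e.hom e.inv e.hom_inv_id h

lemma ge_of_iso (w : WeightStructure C) {X Y : C} (e : X ≅ Y) (h : w.ge Y) : w.ge X :=
  w.ge_retract e.hom e.inv e.hom_inv_id h

lemma le_shift_nat (w : WeightStructure C) {X : C} (h : w.le X) (k : ℕ) :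
    w.le ((shiftFunctor C (-(k : ℤ))).obj X) := by
  induction k with
  | zero =>
    exact w.le_of_iso (by exact (shiftFunctorZero C ℤ).app X) h
  | succ k ih =>
    refine w.le_of_iso ?_ (w.le_shift ih)
    exact (shiftFunctorAdd' C (-(k : ℤ)) (-1) (-((k+1 : ℕ) : ℤ)) (by push_cast; ring)).app X

lemma ge_shift_nat (w : WeightStructure C) {X : C} (h : w.ge X) (k : ℕ) :
    w.ge ((shiftFunctor C (k : ℤ)).obj X) := by
  induction k with
  | zero =>
    exact w.ge_of_iso (by exact (shiftFunctorZero C ℤ).app X) h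
  | succ k ih =>
    refine w.ge_of_iso ?_ (w.ge_shift ih)
    exact (shiftFunctorAdd' C ((k : ℤ)) (1) (((k+1 : ℕ) : ℤ)) (by push_cast; ring)).app X

lemma leDeg_mono (w : WeightStructure C) {a b : ℤ} (hab : a ≤ b) {X : C}
    (h : w.leDeg a X) : w.leDeg b X := by
  have h' := w.le_shift_nat h (b - a).toNat
  refine w.le_of_iso ?_ h'
  exact (shiftFunctorAdd' C (-a) (-((b-a).toNat : ℤ)) (-b) (by omega)).app X

lemma geDeg_mono (w : WeightStructure C) {a b : ℤ} (hab : a ≤ b) {X : C}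
    (h : w.geDeg b X) : w.geDeg a X := by
  have h' := w.ge_shift_nat h (b - a).toNat
  refine w.ge_of_iso ?_ h'
  exact (shiftFunctorAdd' C (-b) (((b-a).toNat : ℤ)) (-a) (by omega)).app X

lemma orth' (w : WeightStructure C) {a b : ℤ} (hab : a < b) {X Y : C}
    (hX : w.leDeg a X) (hY : w.geDeg b Y) (φ : X ⟶ Y) : φ = 0 := by
  apply (shiftFunctor C (-a)).map_injective
  rw [Functor.map_zero]
  have hZ : w.ge ((shiftFunctor C (-a-1)).obj Y) := by
    refine w.ge_of_iso ((shiftFunctorAdd' C (-b) ((b-a-1).toNat : ℤ) (-a-1)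
      (by omega)).app Y) ?_
    exact w.ge_shift_nat hY _
  have e : (shiftFunctor C (-a)).obj Y ≅
      (shiftFunctor C (1 : ℤ)).obj ((shiftFunctor C (-a-1)).obj Y) :=
    (shiftFunctorAdd' C (-a-1) 1 (-a) (by ring)).app Y
  have h0 := w.orth hX hZ ((shiftFunctor C (-a)).map φ ≫ e.hom)
  calc (shiftFunctor C (-a)).map φ
      = ((shiftFunctor C (-a)).map φ ≫ e.hom) ≫ e.inv := by simp
    _ = 0 := by rw [h0, zero_comp]

lemma exists_decomp (w : WeightStructure C) (i : ℤ) (M : C) :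
    ∃ (A B : C) (f : A ⟶ M) (p : M ⟶ B) (δ : B ⟶ (shiftFunctor C (1 : ℤ)).obj A),
      w.IsWeightDecomp i f p δ := by
  obtain ⟨X, Y, f, g, h, mem, hX, hY⟩ := w.decomp ((shiftFunctor C (-i)).obj M)
  let T := (Triangle.shiftFunctor C i).obj (Triangle.mk f g h)
  let e : (shiftFunctor C i).obj ((shiftFunctor C (-i)).obj M) ≅ M :=
    (shiftFunctorCompIsoId C (-i) i (by ring)).app M
  have hT' : Triangle.mk (T.mor₁ ≫ e.hom) (e.inv ≫ T.mor₂) T.mor₃ ∈ distTriang C := by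
    refine isomorphic_distinguished _ (Triangle.shift_distinguished _ mem i) _ ?_
    refine Triangle.isoMk _ _ (Iso.refl _) e.symm (Iso.refl _) ?_ ?_ ?_
    · change (T.mor₁ ≫ e.hom) ≫ e.inv = 𝟙 _ ≫ T.mor₁; exact (Category.assoc _ _ _).trans ((congrArg (T.mor₁ ≫ ·) e.hom_inv_id).trans ((Category.comp_id _).trans (Category.id_comp _).symm))
    · change (e.inv ≫ T.mor₂) ≫ 𝟙 _ = e.inv ≫ T.mor₂; simp
    · change T.mor₃ ≫ (shiftFunctor C 1).map (𝟙 T.obj₁) = 𝟙 T.obj₃ ≫ T.mor₃; simp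
  refine ⟨(shiftFunctor C i).obj X, (shiftFunctor C i).obj Y, _, _, _, hT', ?_, ?_⟩
  · exact w.le_of_iso ((shiftFunctorCompIsoId C i (-i) (by ring)).app X) hX
  · refine w.ge_of_iso ?_ hY
    exact ((shiftFunctorAdd' C i (-(i+1)) (-1) (by ring)).symm.app Y)

end WeightStructure

/-- Theorem 2.1.1(1): if `g` kills weights `m,…,n` and `m ≤ m' ≤ n' ≤ n`, then `g` also kills
weights `m',…,n'`. -/
theorem killsWeights_mono (w : WeightStructure C) (m n m' n' : ℤ)
    (h1 : m ≤ m') (h2 : m' ≤ n') (h3 : n' ≤ n)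
    {M N : C} (g : M ⟶ N) (hg : w.KillsWeights m n g) :
    w.KillsWeights m' n' g := by
  obtain ⟨A, B, A', B', f, p, δ, f', p', δ', ⟨hT, hA, hB⟩, ⟨hT', hA', hB'⟩, hz⟩ := hg
  obtain ⟨X, Y, x, y, d, hTX, hX, hY⟩ := w.exists_decomp n' M
  obtain ⟨U, V, u, v, e, hTU, hU, hV⟩ := w.exists_decomp (m' - 1) N
  refine ⟨X, Y, U, V, x, y, d, u, v, e, ⟨hTX, hX, hY⟩, ⟨hTU, hU, hV⟩, ?_⟩
  -- x ≫ p = 0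
  have hxp : x ≫ p = 0 :=
    w.orth' (by omega) (w.leDeg_mono h3 hX) hB (x ≫ p)
  obtain ⟨α, hα⟩ : ∃ α : X ⟶ A, x = α ≫ f := Triangle.coyoneda_exact₂ _ hT x hxp
  -- f' ≫ v = 0
  have hfv : f' ≫ v = 0 :=
    w.orth' (show m - 1 < m' - 1 + 1 by omega) (w.leDeg_mono (le_refl _) hA') hV (f' ≫ v)
  obtain ⟨β, hβ⟩ : ∃ β : B' ⟶ V, v = p' ≫ β := Triangle.yoneda_exact₂ _ hT' v hfv
  have : x ≫ g ≫ v = α ≫ (f ≫ g ≫ p') ≫ β := by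
    rw [hα, hβ]; simp [Triangle.mk]
  rw [this, hz, zero_comp, comp_zero]
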